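/- In the case k = 0 (transverse Lagrangians ℝⁿ and iℝⁿ in ℂⁿ), the function f(x,y) = |x|·|y| is weakly plurisubharmonic on ℂⁿ ∖ ({x=0} ∪ {y=0}). -/

import Mathlib

noncomputable section

/-- ℂⁿ as a real inner product space. -/
abbrev Cn (n : ℕ) := EuclideanSpace ℂ (Fin n)

/-- α(x,y) = Σ xᵢ², the squared distance to L₁ = iℝⁿ. -/
def alph (n : ℕ) (z : Cn n) : ℝ := ∑ i, (z i).re ^ 2

/-- β(x,y) = Σ_{i≤k} xᵢ² + Σ_{i>k} yᵢ² (0-based: i < k resp. k ≤ i). -/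
def bet (n k : ℕ) (z : Cn n) : ℝ :=
  ∑ i : Fin n, if (i : ℕ) < k then (z i).re ^ 2 else (z i).im ^ 2

/-- The Levi quadratic form of a real function `f` at `z` on the (real) vector `v`:
`dd^c f(v, iv) = Hess f(v,v) + Hess f(iv,iv)`.  Weak plurisubharmonicity of `f` at `z`
(positive semidefiniteness of the complex Hessian `(∂²f/∂zᵢ∂z̄ⱼ)`) is equivalent to
`0 ≤ levi n f z v` for all `v`. -/
def levi (n : ℕ) (f : Cn n → ℝ) (z v : Cn n) : ℝ :=
  iteratedFDeriv ℝ 2 f z ![v, v] + iteratedFDeriv ℝ 2 f z ![Complex.I • v, Complex.I • v]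

/-- The symmetric bilinear form `dd^c f(·, i·)(v,w) = Hess f(v,w) + Hess f(iv,iw)`,
whose matrix in the standard real basis of ℝ²ⁿ is `M₀`. -/
def leviB (n : ℕ) (f : Cn n → ℝ) (z v w : Cn n) : ℝ :=
  iteratedFDeriv ℝ 2 f z ![v, w] + iteratedFDeriv ℝ 2 f z ![Complex.I • v, Complex.I • w]

abbrev En (n : ℕ) := EuclideanSpace ℝ (Fin n)

def reMap (n : ℕ) : (Fin n → ℂ) →L[ℝ] (Fin n → ℝ) :=
  ContinuousLinearMap.pi (fun i => Complex.reCLM.comp (ContinuousLinearMap.proj i))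
def imMap (n : ℕ) : (Fin n → ℂ) →L[ℝ] (Fin n → ℝ) :=
  ContinuousLinearMap.pi (fun i => Complex.imCLM.comp (ContinuousLinearMap.proj i))

def X (n : ℕ) : Cn n →L[ℝ] En n :=
  ((PiLp.continuousLinearEquiv 2 ℝ (fun _ : Fin n => ℝ)).symm : (Fin n → ℝ) →L[ℝ] En n) ∘L
    (reMap n) ∘L ((PiLp.continuousLinearEquiv 2 ℝ (fun _ : Fin n => ℂ)) : Cn n →L[ℝ] (Fin n → ℂ))
def Y (n : ℕ) : Cn n →L[ℝ] En n :=
  ((PiLp.continuousLinearEquiv 2 ℝ (fun _ : Fin n => ℝ)).symm : (Fin n → ℝ) →L[ℝ] En n) ∘L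
    (imMap n) ∘L ((PiLp.continuousLinearEquiv 2 ℝ (fun _ : Fin n => ℂ)) : Cn n →L[ℝ] (Fin n → ℂ))

@[simp] lemma X_apply (n : ℕ) (w : Cn n) (i : Fin n) : X n w i = (w i).re := rfl
@[simp] lemma Y_apply (n : ℕ) (w : Cn n) (i : Fin n) : Y n w i = (w i).im := rfl

def GA (n : ℕ) : Cn n →L[ℝ] Cn n →L[ℝ] ℝ :=
  (((ContinuousLinearMap.compL ℝ (Cn n) (En n) ℝ).flip (X n)).comp
    ((innerSL ℝ (E := En n)))).comp (X n)
def GB (n : ℕ) : Cn n →L[ℝ] Cn n →L[ℝ] ℝ :=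
  (((ContinuousLinearMap.compL ℝ (Cn n) (En n) ℝ).flip (Y n)).comp
    ((innerSL ℝ (E := En n)))).comp (Y n)

@[simp] lemma GA_apply (n : ℕ) (w v : Cn n) : GA n w v = inner ℝ (X n w) (X n v) := rfl
@[simp] lemma GB_apply (n : ℕ) (w v : Cn n) : GB n w v = inner ℝ (Y n w) (Y n v) := rfl

def alphf (n : ℕ) (w : Cn n) : ℝ := inner ℝ (X n w) (X n w)
def betf (n : ℕ) (w : Cn n) : ℝ := inner ℝ (Y n w) (Y n w)

lemma hasFDerivAt_alphf (n : ℕ) (z : Cn n) :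
    HasFDerivAt (alphf n) ((2:ℝ) • GA n z) z := by
  have h := ((X n).hasFDerivAt (x := z)).inner ℝ ((X n).hasFDerivAt (x := z))
  refine h.congr_fderiv ?_
  ext v
  simp [fderivInnerCLM_apply, real_inner_comm, two_mul, mul_comm]

lemma hasFDerivAt_betf (n : ℕ) (z : Cn n) :
    HasFDerivAt (betf n) ((2:ℝ) • GB n z) z := by
  have h := ((Y n).hasFDerivAt (x := z)).inner ℝ ((Y n).hasFDerivAt (x := z))
  refine h.congr_fderiv ?_
  ext v
  simp [fderivInnerCLM_apply, real_inner_comm, two_mul, mul_comm]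

def Ff (n : ℕ) (w : Cn n) : Cn n →L[ℝ] ℝ :=
  (Real.sqrt (betf n w) * (Real.sqrt (alphf n w))⁻¹) • GA n w
  + (Real.sqrt (alphf n w) * (Real.sqrt (betf n w))⁻¹) • GB n w

lemma sqrt_alphf_ne (n : ℕ) {w : Cn n} (h : alphf n w ≠ 0) : Real.sqrt (alphf n w) ≠ 0 := by
  rw [Real.sqrt_ne_zero']
  exact lt_of_le_of_ne real_inner_self_nonneg (Ne.symm h)

lemma sqrt_betf_ne (n : ℕ) {w : Cn n} (h : betf n w ≠ 0) : Real.sqrt (betf n w) ≠ 0 := by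
  rw [Real.sqrt_ne_zero']
  exact lt_of_le_of_ne real_inner_self_nonneg (Ne.symm h)

lemma hasFDerivAt_f (n : ℕ) (w : Cn n) (h1 : alphf n w ≠ 0) (h2 : betf n w ≠ 0) :
    HasFDerivAt (fun w => Real.sqrt (alphf n w) * Real.sqrt (betf n w)) (Ff n w) w := by
  have ha := (hasFDerivAt_alphf n w).sqrt h1
  have hb := (hasFDerivAt_betf n w).sqrt h2
  have h := ha.mul hb
  refine h.congr_fderiv ?_
  ext v
  have hsa := sqrt_alphf_ne n h1
  have hsb := sqrt_betf_ne n h2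
  simp only [Ff, ContinuousLinearMap.add_apply, ContinuousLinearMap.coe_smul', Pi.smul_apply,
    GA_apply, GB_apply, smul_eq_mul, one_div]
  field_simp
  ring

lemma hess_eval (n : ℕ) (z : Cn n) (h1 : alphf n z ≠ 0) (h2 : betf n z ≠ 0) (v w : Cn n) :
    iteratedFDeriv ℝ 2 (fun w => Real.sqrt (alphf n w) * Real.sqrt (betf n w)) z ![v, w] =
      (Real.sqrt (betf n z) / Real.sqrt (alphf n z)) * inner ℝ (X n v) (X n w)
      + (Real.sqrt (alphf n z) / Real.sqrt (betf n z)) * inner ℝ (Y n v) (Y n w)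
      - (Real.sqrt (betf n z) / (Real.sqrt (alphf n z))^3)
          * (inner ℝ (X n z) (X n v) * inner ℝ (X n z) (X n w))
      - (Real.sqrt (alphf n z) / (Real.sqrt (betf n z))^3)
          * (inner ℝ (Y n z) (Y n v) * inner ℝ (Y n z) (Y n w))
      + (1 / (Real.sqrt (alphf n z) * Real.sqrt (betf n z)))
          * ((inner ℝ (X n z) (X n v) : ℝ) * inner ℝ (Y n z) (Y n w)
             + (inner ℝ (Y n z) (Y n v) : ℝ) * inner ℝ (X n z) (X n w)) := by
  have hsa := sqrt_alphf_ne n h1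
  have hsb := sqrt_betf_ne n h2
  set f : Cn n → ℝ := fun w => Real.sqrt (alphf n w) * Real.sqrt (betf n w) with hf
  -- first derivatives of the coefficient functions
  have ha : HasFDerivAt (fun w => Real.sqrt (alphf n w))
      ((1 / (2 * Real.sqrt (alphf n z))) • ((2:ℝ) • GA n z)) z :=
    (hasFDerivAt_alphf n z).sqrt h1
  have hb : HasFDerivAt (fun w => Real.sqrt (betf n w))
      ((1 / (2 * Real.sqrt (betf n z))) • ((2:ℝ) • GB n z)) z :=
    (hasFDerivAt_betf n z).sqrt h2
  have hainv : HasFDerivAt (fun w => (Real.sqrt (alphf n w))⁻¹)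
      ((-(Real.sqrt (alphf n z) ^ 2)⁻¹) •
        ((1 / (2 * Real.sqrt (alphf n z))) • ((2:ℝ) • GA n z))) z :=
    (hasDerivAt_inv hsa).comp_hasFDerivAt z ha
  have hbinv : HasFDerivAt (fun w => (Real.sqrt (betf n w))⁻¹)
      ((-(Real.sqrt (betf n z) ^ 2)⁻¹) •
        ((1 / (2 * Real.sqrt (betf n z))) • ((2:ℝ) • GB n z))) z :=
    (hasDerivAt_inv hsb).comp_hasFDerivAt z hb
  have hc1 := hb.mul hainv
  have hc2 := ha.mul hbinv
  have hFF := (hc1.smul ((GA n).hasFDerivAt (x := z))).add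
      (hc2.smul ((GB n).hasFDerivAt (x := z)))
  -- fderiv of f agrees with Ff near z
  have hopen : IsOpen {w : Cn n | alphf n w ≠ 0 ∧ betf n w ≠ 0} := by
    have hca : Continuous (alphf n) := ((X n).continuous.inner (X n).continuous)
    have hcb : Continuous (betf n) := ((Y n).continuous.inner (Y n).continuous)
    exact (isOpen_compl_singleton.preimage hca).inter (isOpen_compl_singleton.preimage hcb)
  have hev : fderiv ℝ f =ᶠ[nhds z] Ff n := by
    filter_upwards [hopen.mem_nhds ⟨h1, h2⟩] with w hw
    exact (hasFDerivAt_f n w hw.1 hw.2).fderiv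
  have hFF' : HasFDerivAt (Ff n) _ z := hFF
  rw [iteratedFDeriv_two_apply, hev.fderiv_eq, hFF'.fderiv]
  simp only [ContinuousLinearMap.add_apply, ContinuousLinearMap.coe_smul', Pi.smul_apply, Pi.mul_apply,
    ContinuousLinearMap.smulRight_apply, GA_apply, GB_apply, smul_eq_mul, one_div,
    Matrix.cons_val_zero, Matrix.cons_val_one, Matrix.head_cons]
  field_simp
  ring

lemma cs_key (n : ℕ) (z v : Cn n) (P2 Q2 : ℝ) :
    (Q2 * (∑ i, (z i).re * (v i).re) - P2 * (∑ i, (z i).im * (v i).im))^2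
    + (Q2 * (∑ i, (z i).re * (v i).im) + P2 * (∑ i, (z i).im * (v i).re))^2
    ≤ (Q2^2 * (∑ i, (z i).re^2) + P2^2 * (∑ i, (z i).im^2))
        * (∑ i, ((v i).re^2 + (v i).im^2)) := by
  set V : Cn n := (WithLp.equiv 2 (Fin n → ℂ)).symm
    (fun i => ((Q2 * (z i).re : ℝ) : ℂ) - Complex.I * ((P2 * (z i).im : ℝ) : ℂ)) with hV
  have hVi : ∀ i, V i = ((Q2 * (z i).re : ℝ) : ℂ) - Complex.I * ((P2 * (z i).im : ℝ) : ℂ) :=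
    fun i => rfl
  have hcs := norm_inner_le_norm (𝕜 := ℂ) V v
  have h2 : ‖(inner ℂ V v)‖^2 ≤ ‖V‖^2 * ‖v‖^2 := by
    rw [← mul_pow]
    exact pow_le_pow_left₀ (norm_nonneg _) hcs 2
  have hinner : (inner ℂ V v) = ∑ i, (starRingEnd ℂ) (V i) * v i := by
    simp [PiLp.inner_apply, RCLike.inner_apply]
    exact Finset.sum_congr rfl (fun i _ => mul_comm _ _)
  have hre : (inner ℂ V v).re
      = Q2 * (∑ i, (z i).re * (v i).re) - P2 * (∑ i, (z i).im * (v i).im) := by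
    rw [hinner, Complex.re_sum, Finset.mul_sum, Finset.mul_sum, ← Finset.sum_sub_distrib]
    refine Finset.sum_congr rfl (fun i _ => ?_)
    rw [hVi i]
    simp [Complex.mul_re]
    ring
  have him : (inner ℂ V v).im
      = Q2 * (∑ i, (z i).re * (v i).im) + P2 * (∑ i, (z i).im * (v i).re) := by
    rw [hinner, Complex.im_sum, Finset.mul_sum, Finset.mul_sum, ← Finset.sum_add_distrib]
    refine Finset.sum_congr rfl (fun i _ => ?_)
    rw [hVi i]
    simp [Complex.mul_im]
    ring
  have hnormsq : ∀ (c : ℂ), ‖c‖^2 = c.re^2 + c.im^2 := by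
    intro c
    rw [Complex.sq_norm, Complex.normSq_apply]
    ring
  have hVn : ‖V‖^2 = Q2^2 * (∑ i, (z i).re^2) + P2^2 * (∑ i, (z i).im^2) := by
    rw [EuclideanSpace.norm_eq, Real.sq_sqrt (by positivity)]
    rw [Finset.mul_sum, Finset.mul_sum, ← Finset.sum_add_distrib]
    refine Finset.sum_congr rfl (fun i _ => ?_)
    rw [hnormsq, hVi i]
    simp
    ring
  have hvn : ‖v‖^2 = ∑ i, ((v i).re^2 + (v i).im^2) := by
    rw [EuclideanSpace.norm_eq, Real.sq_sqrt (by positivity)]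
    refine Finset.sum_congr rfl (fun i _ => ?_)
    rw [hnormsq]
  rw [hnormsq, hre, him, hVn, hvn] at h2
  exact h2

lemma real_inner_eq_sum (n : ℕ) (x y : En n) : inner ℝ x y = ∑ i, x i * y i := by
  simp [PiLp.inner_apply, RCLike.inner_apply]
  exact Finset.sum_congr rfl (fun i _ => mul_comm _ _)

lemma alphf_eq (n : ℕ) (w : Cn n) : alphf n w = ∑ i, (w i).re^2 := by
  rw [alphf, real_inner_eq_sum]
  simp [sq]

lemma betf_eq (n : ℕ) (w : Cn n) : betf n w = ∑ i, (w i).im^2 := by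
  rw [betf, real_inner_eq_sum]
  simp [sq]

lemma X_J (n : ℕ) (v : Cn n) : X n (Complex.I • v) = -(Y n v) := by
  ext i
  simp [Complex.mul_re]

lemma Y_J (n : ℕ) (v : Cn n) : Y n (Complex.I • v) = X n v := by
  ext i
  simp [Complex.mul_im]


set_option maxHeartbeats 2000000 in
theorem normprod_weakly_psh (n : ℕ) (z : Cn n)
    (h1 : (∑ i, (z i).re ^ 2) ≠ 0) (h2 : (∑ i, (z i).im ^ 2) ≠ 0) (v : Cn n) :
    0 ≤ levi n
      (fun w => Real.sqrt (∑ i, (w i).re ^ 2) * Real.sqrt (∑ i, (w i).im ^ 2)) z v := by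
  have h1' : alphf n z ≠ 0 := by rwa [alphf_eq]
  have h2' : betf n z ≠ 0 := by rwa [betf_eq]
  have hfun : (fun w : Cn n => Real.sqrt (∑ i, (w i).re ^ 2) * Real.sqrt (∑ i, (w i).im ^ 2))
      = (fun w => Real.sqrt (alphf n w) * Real.sqrt (betf n w)) := by
    funext u
    rw [alphf_eq, betf_eq]
  unfold levi
  rw [hfun, hess_eval n z h1' h2' v v, hess_eval n z h1' h2' (Complex.I • v) (Complex.I • v),
    X_J, Y_J]
  simp only [inner_neg_neg, inner_neg_left, inner_neg_right, neg_neg]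
  simp only [alphf_eq, betf_eq, real_inner_eq_sum, X_apply, Y_apply]
  set P := Real.sqrt (∑ i, (z i).re ^ 2) with hP
  set Q := Real.sqrt (∑ i, (z i).im ^ 2) with hQ
  set A := ∑ i, (z i).re * (v i).re with hA
  set B := ∑ i, (z i).re * (v i).im with hB
  set C := ∑ i, (z i).im * (v i).re with hC
  set D := ∑ i, (z i).im * (v i).im with hD
  set sx := ∑ i, (v i).re * (v i).re with hsx
  set sy := ∑ i, (v i).im * (v i).im with hsy
  have hp2 : P^2 = ∑ i, (z i).re ^ 2 := Real.sq_sqrt (by positivity)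
  have hq2 : Q^2 = ∑ i, (z i).im ^ 2 := Real.sq_sqrt (by positivity)
  have hPpos : 0 < P := Real.sqrt_pos.2
    (lt_of_le_of_ne (by positivity) (Ne.symm h1))
  have hQpos : 0 < Q := Real.sqrt_pos.2
    (lt_of_le_of_ne (by positivity) (Ne.symm h2))
  have key := cs_key n z v (P^2) (Q^2)
  have hsum : (∑ i, ((v i).re^2 + (v i).im^2)) = sx + sy := by
    rw [hsx, hsy, ← Finset.sum_add_distrib]
    exact Finset.sum_congr rfl (fun i _ => by ring)
  rw [← hA, ← hB, ← hC, ← hD, ← hp2, ← hq2, hsum] at key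
  have hN : 0 ≤ ((Q^2)^2*P^2 + (P^2)^2*Q^2)*(sx+sy) - (Q^2)^2*(A^2+B^2)
      - (P^2)^2*(C^2+D^2) + 2*P^2*Q^2*(A*D - B*C) := by nlinarith [key]
  have h3 : (0:ℝ) < P ^ 3 * Q ^ 3 := by positivity
  refine le_trans (div_nonneg hN h3.le) (le_of_eq ?_)
  field_simp
  ring
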